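/- Let M ∈ Sym(p+q) be a symmetric block matrix [[M₁₁, M₁₂],[M₁₂ᵀ, M₂₂]] and N ∈ Sym(p+q) similarly partitioned with N₂₂ ≺ 0 (generalized Slater-type condition assumed: there exists Z̄ with [I, Z̄] N [I, Z̄]ᵀ ≻ 0). If there exist scalars α ≥ 0 and β > 0 such that M − αN ⪰ diag(βI_p, 0), then for every Z ∈ ℝ^{p×q} with [I, Z] N [I, Z]ᵀ ⪰ 0 it holds that [I, Z] M [I, Z]ᵀ ≻ 0. -/

import Mathlib

open Matrix

/-- Sufficiency direction of the matrix S-lemma: if `M - αN ⪰ diag(βI, 0)` for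
some `α ≥ 0`, `β > 0`, then every `Z` satisfying the QMI for `N` satisfies the
strict QMI for `M`. -/
theorem matrix_s_lemma_sufficiency
    (p q : ℕ)
    (M N : Matrix (Fin p ⊕ Fin q) (Fin p ⊕ Fin q) ℝ)
    (hM : Mᵀ = M) (hN : Nᵀ = N)
    (hN22 : (-(N.toBlocks₂₂)).PosDef)
    (hslater : ∃ Zbar : Matrix (Fin p) (Fin q) ℝ,
      ((Matrix.fromCols (1 : Matrix (Fin p) (Fin p) ℝ) Zbar) * N *
       (Matrix.fromCols (1 : Matrix (Fin p) (Fin p) ℝ) Zbar)ᵀ).PosDef)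
    (α β : ℝ) (hα : 0 ≤ α) (hβ : 0 < β)
    (hcert : (M - α • N -
      Matrix.fromBlocks (β • (1 : Matrix (Fin p) (Fin p) ℝ)) 0 0 0).PosSemidef) :
    ∀ Z : Matrix (Fin p) (Fin q) ℝ,
      ((Matrix.fromCols (1 : Matrix (Fin p) (Fin p) ℝ) Z) * N *
       (Matrix.fromCols (1 : Matrix (Fin p) (Fin p) ℝ) Z)ᵀ).PosSemidef →
      ((Matrix.fromCols (1 : Matrix (Fin p) (Fin p) ℝ) Z) * M *
       (Matrix.fromCols (1 : Matrix (Fin p) (Fin p) ℝ) Z)ᵀ).PosDef := by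
  intro Z hZ
  set C := Matrix.fromCols (1 : Matrix (Fin p) (Fin p) ℝ) Z with hC
  set D := Matrix.fromBlocks (β • (1 : Matrix (Fin p) (Fin p) ℝ)) 0 0
      (0 : Matrix (Fin q) (Fin q) ℝ) with hD
  -- C * D * Cᵀ = β • 1
  have hCD : C * D * Cᵀ = β • (1 : Matrix (Fin p) (Fin p) ℝ) := by
    rw [hC, hD, transpose_fromCols, fromCols_mul_fromBlocks,
      fromCols_mul_fromRows]
    simp
  -- conjugate of the certificate is PSD
  have h1 : (C * (M - α • N - D) * Cᵀ).PosSemidef := by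
    have := hcert.mul_mul_conjTranspose_same C
    simpa using this
  have hsplit : C * (M - α • N - D) * Cᵀ
      = C * M * Cᵀ - α • (C * N * Cᵀ) - C * D * Cᵀ := by
    simp [Matrix.mul_sub, Matrix.sub_mul, Matrix.mul_smul, Matrix.smul_mul]
  have hkey : C * M * Cᵀ
      = (C * (M - α • N - D) * Cᵀ + α • (C * N * Cᵀ)) + β • (1 : Matrix (Fin p) (Fin p) ℝ) := by
    rw [hsplit, hCD]; abel
  rw [hkey]
  have hαN : (α • (C * N * Cᵀ)).PosSemidef := by
    refine Matrix.PosSemidef.of_dotProduct_mulVec_nonneg (by simp [Matrix.IsHermitian, hN, Matrix.mul_assoc]) fun x => ?_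
    rw [smul_mulVec, dotProduct_smul]
    exact mul_nonneg hα (hZ.dotProduct_mulVec_nonneg x)
  have hpd : (β • (1 : Matrix (Fin p) (Fin p) ℝ)).PosDef := by
    refine Matrix.PosDef.of_dotProduct_mulVec_pos (by simp [Matrix.IsHermitian]) fun x hx => ?_
    rw [smul_mulVec, one_mulVec, dotProduct_smul]
    exact mul_pos hβ (Matrix.dotProduct_star_self_pos_iff.mpr hx)
  exact Matrix.PosDef.posSemidef_add (h1.add hαN) hpd
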